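/- Let k ≥ 3, identify A_2 = {a_0, a_1} as a subset of A_k = {a_0,...,a_{k−1}}, and let A_{[2,k[} = {a_2,...,a_{k−1}}. If P is a finite maximal prefix code of A_2^*, then the set {a_0} ∪ a_1·P ∪ spref({a_0} ∪ a_1·P)·A_{[2,k[} is a finite maximal prefix code of A_k^*, where a_1·P = {a_1 p : p ∈ P}. -/

import Mathlib

/-- A prefix code: no element is a strict prefix of another. -/
def PrefixCode {A : Type*} (P : Set (List A)) : Prop :=
  ∀ p ∈ P, ∀ q ∈ P, p <+: q → p = q

/-- A maximal prefix code of `A^*`. -/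
def MaxPrefixCode {A : Type*} (P : Set (List A)) : Prop :=
  PrefixCode P ∧ ∀ Q : Set (List A), PrefixCode Q → P ⊆ Q → P = Q

/-- A maximal prefix code of the sub-free-monoid `L` (e.g. `A_2^* ⊆ A_k^*`). -/
def MaxPrefixCodeOn {A : Type*} (L P : Set (List A)) : Prop :=
  P ⊆ L ∧ PrefixCode P ∧ ∀ Q : Set (List A), Q ⊆ L → PrefixCode Q → P ⊆ Q → P = Q

/-- `A_2^*` viewed inside `A_k^*`: strings using only the letters `a_0, a_1`. -/
def Str2 (k : ℕ) : Set (List (Fin k)) :=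
  {w | ∀ a ∈ w, (a : ℕ) < 2}

/-- The set of strict prefixes of elements of `P`. -/
def spref {A : Type*} (P : Set (List A)) : Set (List A) :=
  {x | ∃ p ∈ P, x <+: p ∧ x ≠ p}

/-- `P ∪ spref(P)·A_{[2,k[}`. -/
def extd {k : ℕ} (P : Set (List (Fin k))) : Set (List (Fin k)) :=
  P ∪ {w | ∃ x ∈ spref P, ∃ b : Fin k, 2 ≤ (b : ℕ) ∧ w = x ++ [b]}

/-- The set `{a_0} ∪ a_1·P`. -/
def base16 {k : ℕ} (hk : 3 ≤ k) (P : Set (List (Fin k))) : Set (List (Fin k)) :=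
  {[(⟨0, by omega⟩ : Fin k)]} ∪ (fun w => (⟨1, by omega⟩ : Fin k) :: w) '' P

/-- Splitting a word at the first letter `≥ 2`. -/
lemma split_at_big {k : ℕ} (w : List (Fin k)) :
    (∀ a ∈ w, (a : ℕ) < 2) ∨
      ∃ (x : List (Fin k)) (c : Fin k) (y : List (Fin k)),
        w = x ++ c :: y ∧ (∀ a ∈ x, (a : ℕ) < 2) ∧ 2 ≤ (c : ℕ) := by
  induction w with
  | nil => exact Or.inl (by simp)
  | cons c t ih =>
    by_cases hc : (c : ℕ) < 2
    · rcases ih with h | ⟨x, d, y, rfl, hx, hd⟩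
      · exact Or.inl (by
          intro a ha
          rcases List.mem_cons.mp ha with rfl | ha
          · exact hc
          · exact h a ha)
      · refine Or.inr ⟨c :: x, d, y, rfl, ?_, hd⟩
        intro a ha
        rcases List.mem_cons.mp ha with rfl | ha
        · exact hc
        · exact hx a ha
    · exact Or.inr ⟨[], c, t, rfl, by simp, by omega⟩

/-- If `P` is a finite maximal prefix code of `A_2^*` (inside `A_k^*`, `k ≥ 3`), then
`{a_0} ∪ a_1·P ∪ spref({a_0} ∪ a_1·P)·A_{[2,k[}` is a finite maximal prefix code
of `A_k^*`. -/
theorem stmt_16 {k : ℕ} (hk : 3 ≤ k) (P : Set (List (Fin k)))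
    (hfin : P.Finite) (hP : MaxPrefixCodeOn (Str2 k) P) :
    (extd (base16 hk P)).Finite ∧ MaxPrefixCode (extd (base16 hk P)) := by
  obtain ⟨hPL, hPpc, hPmax⟩ := hP
  set a0 : Fin k := ⟨0, by omega⟩ with ha0
  set a1 : Fin k := ⟨1, by omega⟩ with ha1
  set B : Set (List (Fin k)) := base16 hk P with hBdef
  have hv0 : (a0 : ℕ) = 0 := by rw [ha0]
  have hv1 : (a1 : ℕ) = 1 := by rw [ha1]
  -- comparability property of P inside Str2
  have hcomp : ∀ w ∈ Str2 k, ∃ p ∈ P, p <+: w ∨ w <+: p := by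
    intro w hw
    by_contra h
    push_neg at h
    have hQpc : PrefixCode (P ∪ {w}) := by
      intro p hp q hq hpq
      rcases hp with hp | hp
      · rcases hq with hq | hq
        · exact hPpc p hp q hq hpq
        · rw [Set.mem_singleton_iff] at hq; subst hq
          exact absurd hpq (h p hp).1
      · rw [Set.mem_singleton_iff] at hp; subst hp
        rcases hq with hq | hq
        · exact absurd hpq (h q hq).2
        · rw [Set.mem_singleton_iff] at hq; subst hq; rfl
    have hsubL : P ∪ {w} ⊆ Str2 k := by
      intro x hx
      rcases hx with hx | hx
      · exact hPL hx
      · rw [Set.mem_singleton_iff] at hx; subst hx; exact hw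
    have heq := hPmax (P ∪ {w}) hsubL hQpc Set.subset_union_left
    have hwP : w ∈ P := heq ▸ Set.mem_union_right _ rfl
    exact (h w hwP).1 (List.prefix_refl w)
  -- B is contained in Str2
  have hBL : B ⊆ Str2 k := by
    intro x hx
    rcases hx with hx | ⟨p, hp, rfl⟩
    · rw [Set.mem_singleton_iff] at hx; subst hx
      intro a ha
      simp only [List.mem_singleton] at ha; subst ha; omega
    · intro a ha
      rcases List.mem_cons.mp ha with rfl | ha
      · omega
      · exact hPL hp a ha
  -- B is a prefix code
  have hBpc : PrefixCode B := by
    intro p hp q hq hpq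
    rcases hp with hp | ⟨p', hp', rfl⟩ <;> rcases hq with hq | ⟨q', hq', rfl⟩
    · rw [Set.mem_singleton_iff] at hp hq; rw [hp, hq]
    · rw [Set.mem_singleton_iff] at hp; subst hp
      rw [List.cons_prefix_cons] at hpq
      have := congrArg Fin.val hpq.1
      rw [hv0, hv1] at this
      omega
    · rw [Set.mem_singleton_iff] at hq; subst hq
      rw [List.cons_prefix_cons] at hpq
      have := congrArg Fin.val hpq.1
      rw [hv0, hv1] at this
      omega
    · rw [List.cons_prefix_cons] at hpq
      rw [hPpc p' hp' q' hq' hpq.2]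
  -- comparability for B inside Str2
  have hBcomp : ∀ w ∈ Str2 k, ∃ b ∈ B, b <+: w ∨ w <+: b := by
    intro w hw
    match w with
    | [] =>
      exact ⟨[a0], Or.inl rfl, Or.inr (List.nil_prefix)⟩
    | c :: v =>
      have hc : (c : ℕ) < 2 := hw c List.mem_cons_self
      have hv : v ∈ Str2 k := fun a ha => hw a (List.mem_cons_of_mem _ ha)
      have : (c : ℕ) = 0 ∨ (c : ℕ) = 1 := by omega
      rcases this with h0 | h1
      · have : c = a0 := Fin.ext (by rw [hv0]; exact h0)
        subst this
        exact ⟨[a0], Or.inl rfl, Or.inl ⟨v, rfl⟩⟩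
      · have : c = a1 := Fin.ext (by rw [hv1]; exact h1)
        subst this
        obtain ⟨p, hp, hcmp⟩ := hcomp v hv
        refine ⟨a1 :: p, Or.inr ⟨p, hp, rfl⟩, ?_⟩
        rcases hcmp with h | h
        · exact Or.inl (List.cons_prefix_cons.mpr ⟨rfl, h⟩)
        · exact Or.inr (List.cons_prefix_cons.mpr ⟨rfl, h⟩)
  -- letters of elements of spref B are < 2
  have hsprefL : ∀ x ∈ spref B, ∀ a ∈ x, (a : ℕ) < 2 := by
    rintro x ⟨q, hq, hxq, _⟩ a ha
    exact hBL hq a (hxq.sublist.subset ha)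
  -- extd B is a prefix code
  have hEpc : PrefixCode (extd B) := by
    rintro p hp q hq hpq
    rcases hp with hp | ⟨x, hx, b, hb, rfl⟩ <;> rcases hq with hq | ⟨y, hy, c, hc, rfl⟩
    · exact hBpc p hp q hq hpq
    · rcases List.prefix_concat_iff.mp hpq with h | h
      · exact h
      · -- p <+: y, y strict prefix of some q' ∈ B : contradiction with hBpc
        obtain ⟨q', hq', hyq', hne⟩ := hy
        have hpq' : p <+: q' := h.trans hyq'
        have := hBpc p hp q' hq' hpq'
        subst this
        exact absurd (hyq'.eq_of_length_le h.length_le) hne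
    · -- x ++ [b] <+: q ∈ B ⊆ Str2 : letter b is < 2, contradiction
      have hbq : b ∈ q := hpq.sublist.subset (by simp)
      have := hBL hq b hbq
      omega
    · rcases List.prefix_concat_iff.mp hpq with h | h
      · exact h
      · -- x ++ [b] <+: y, b would be a letter of y, all < 2
        have : b ∈ y := h.sublist.subset (by simp)
        have := hsprefL y hy b this
        omega
  -- fullness: every word is comparable to an element of extd B
  have hfull : ∀ w : List (Fin k), ∃ p ∈ extd B, p <+: w ∨ w <+: p := by
    intro w
    rcases split_at_big w with hw | ⟨x, c, y, rfl, hx, hc⟩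
    · obtain ⟨b, hb, hcmp⟩ := hBcomp w hw
      exact ⟨b, Or.inl hb, hcmp⟩
    · obtain ⟨b, hb, hcmp⟩ := hBcomp x hx
      rcases hcmp with h | h
      · exact ⟨b, Or.inl hb, Or.inl (h.trans ⟨c :: y, rfl⟩)⟩
      · by_cases hxb : x = b
        · subst hxb
          exact ⟨x, Or.inl hb, Or.inl ⟨c :: y, rfl⟩⟩
        · refine ⟨x ++ [c], Or.inr ⟨x, ⟨b, hb, h, hxb⟩, c, hc, rfl⟩, Or.inl ?_⟩
          exact ⟨y, by simp⟩
  constructor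
  · -- finiteness
    have hBfin : B.Finite := (Set.finite_singleton _).union (hfin.image _)
    have hsfin : (spref B).Finite := by
      have : spref B ⊆ ⋃ p ∈ B, {x | x <+: p} := by
        rintro x ⟨p, hp, hxp, _⟩
        exact Set.mem_biUnion hp hxp
      refine Set.Finite.subset (Set.Finite.biUnion hBfin (fun p _ => ?_)) this
      refine Set.Finite.subset (p.inits.finite_toSet) ?_
      intro x hx
      simpa [List.mem_inits] using hx
    refine (hBfin.union ?_)
    have : {w | ∃ x ∈ spref B, ∃ b : Fin k, 2 ≤ (b : ℕ) ∧ w = x ++ [b]} ⊆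
        Set.image2 (fun x (b : Fin k) => x ++ [b]) (spref B) Set.univ := by
      rintro w ⟨x, hx, b, _, rfl⟩
      exact Set.mem_image2_of_mem hx (Set.mem_univ b)
    exact Set.Finite.subset (Set.Finite.image2 _ hsfin Set.finite_univ) this
  · refine ⟨hEpc, fun Q hQpc hsub => ?_⟩
    refine Set.Subset.antisymm hsub fun q hq => ?_
    obtain ⟨p, hp, hcmp⟩ := hfull q
    rcases hcmp with h | h
    · exact (hQpc p (hsub hp) q hq h) ▸ hp
    · rw [hQpc q hq p (hsub hp) h]; exact hp
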